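/- Let λ > 0 and ℓ > 0, let u(y) = exp(λ(y − ℓ)), and let x(q) = ℓ + (4/λ)·ln(q + (1 − q)·exp(−λℓ/4)) for q ∈ [0, 1]. Then the fourth-order condition x''(q)·u'''(x(q)) + (1/4)·(x'(q))²·u''''(x(q)) = 0 holds for every q ∈ [0, 1]. -/

import Mathlib

/-- for u(y) = exp(λ(y − ℓ)) and
x(q) = ℓ + (4/λ)·ln(q + (1 − q)·exp(−λℓ/4)), the fourth-order condition
x''(q)·u'''(x(q)) + (1/4)·(x'(q))²·u''''(x(q)) = 0 holds for every q ∈ [0, 1]. -/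
theorem stmt_16 (lam ℓ : ℝ) (hlam : 0 < lam) (hℓ : 0 < ℓ)
    (u x : ℝ → ℝ)
    (hu : u = fun y : ℝ => Real.exp (lam * (y - ℓ)))
    (hx : x = fun q : ℝ => ℓ + 4 / lam * Real.log (q + (1 - q) * Real.exp (-(lam * ℓ) / 4))) :
    ∀ q ∈ Set.Icc (0 : ℝ) 1,
      iteratedDeriv 2 x q * iteratedDeriv 3 u (x q)
        + 1 / 4 * (deriv x q) ^ 2 * iteratedDeriv 4 u (x q) = 0 := by
  subst hu hx
  set a : ℝ := Real.exp (-(lam * ℓ) / 4) with ha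
  have hlamne : lam ≠ 0 := ne_of_gt hlam
  have ha0 : 0 < a := Real.exp_pos _
  have ha1 : a < 1 := by
    rw [ha, ← Real.exp_zero]
    apply Real.exp_lt_exp.mpr
    nlinarith [mul_pos hlam hℓ]
  -- derivative of g r = r + (1-r)*a
  have hgd : ∀ r : ℝ, HasDerivAt (fun r : ℝ => r + (1 - r) * a) (1 - a) r := by
    intro r
    have h1 : HasDerivAt (fun r : ℝ => r + (1 - r) * a) (1 + (0 - 1) * a) r :=
      (hasDerivAt_id r).add (((hasDerivAt_const r (1 : ℝ)).sub (hasDerivAt_id r)).mul_const a)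
    convert h1 using 1; ring
  -- derivative of x
  have hxd : ∀ r : ℝ, 0 < r + (1 - r) * a →
      HasDerivAt (fun q : ℝ => ℓ + 4 / lam * Real.log (q + (1 - q) * a))
        (4 / lam * ((1 - a) / (r + (1 - r) * a))) r := by
    intro r hr
    have hlog : HasDerivAt (fun q : ℝ => Real.log (q + (1 - q) * a))
        ((1 - a) / (r + (1 - r) * a)) r := by
      have := (Real.hasDerivAt_log hr.ne').comp r (hgd r)
      simpa [div_eq_inv_mul, Function.comp_def] using this
    exact (hlog.const_mul (4 / lam)).const_add ℓ
  -- iterated derivatives of u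
  have hud : ∀ y : ℝ, HasDerivAt (fun y : ℝ => Real.exp (lam * (y - ℓ)))
      (lam * Real.exp (lam * (y - ℓ))) y := by
    intro y
    have h1 : HasDerivAt (fun y : ℝ => lam * (y - ℓ)) lam y := by
      simpa using ((hasDerivAt_id y).sub_const ℓ).const_mul lam
    simpa [mul_comm, Function.comp_def] using (Real.hasDerivAt_exp _).comp y h1
  have hiter : ∀ n : ℕ, ∀ y : ℝ,
      iteratedDeriv n (fun y : ℝ => Real.exp (lam * (y - ℓ))) y
        = lam ^ n * Real.exp (lam * (y - ℓ)) := by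
    intro n
    induction n with
    | zero => intro y; simp
    | succ n ih =>
      intro y
      rw [iteratedDeriv_succ]
      have heq : deriv (iteratedDeriv n (fun y : ℝ => Real.exp (lam * (y - ℓ)))) y
          = deriv (fun y : ℝ => lam ^ n * Real.exp (lam * (y - ℓ))) y := by
        congr 1; funext z; exact ih z
      rw [heq, (((hud y).const_mul (lam ^ n)).deriv)]
      ring
  intro q hq
  obtain ⟨hq0, hq1⟩ := hq
  have hgq : 0 < q + (1 - q) * a := by nlinarith
  -- first derivative value
  have hd1 : deriv (fun q : ℝ => ℓ + 4 / lam * Real.log (q + (1 - q) * a)) q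
      = 4 / lam * ((1 - a) / (q + (1 - q) * a)) := (hxd q hgq).deriv
  -- second derivative
  have hopen : IsOpen {r : ℝ | 0 < r + (1 - r) * a} :=
    isOpen_lt continuous_const (by continuity)
  have hev : deriv (fun q : ℝ => ℓ + 4 / lam * Real.log (q + (1 - q) * a))
      =ᶠ[nhds q] fun r : ℝ => 4 / lam * ((1 - a) / (r + (1 - r) * a)) :=
    Filter.eventuallyEq_of_mem (hopen.mem_nhds hgq) (fun r hr => (hxd r hr).deriv)
  have hphi : HasDerivAt (fun r : ℝ => 4 / lam * ((1 - a) / (r + (1 - r) * a)))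
      (4 / lam * ((0 * (q + (1 - q) * a) - (1 - a) * (1 - a)) / (q + (1 - q) * a) ^ 2)) q :=
    (((hasDerivAt_const q (1 - a)).div (hgd q) hgq.ne').const_mul (4 / lam))
  have hd2 : iteratedDeriv 2 (fun q : ℝ => ℓ + 4 / lam * Real.log (q + (1 - q) * a)) q
      = 4 / lam * ((0 * (q + (1 - q) * a) - (1 - a) * (1 - a)) / (q + (1 - q) * a) ^ 2) := by
    rw [iteratedDeriv_succ, iteratedDeriv_one, hev.deriv_eq]
    exact hphi.deriv
  -- value of exp at x q
  have hxval : Real.exp (lam *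
      ((ℓ + 4 / lam * Real.log (q + (1 - q) * a)) - ℓ)) = (q + (1 - q) * a) ^ 4 := by
    have : lam * ((ℓ + 4 / lam * Real.log (q + (1 - q) * a)) - ℓ)
        = Real.log ((q + (1 - q) * a) ^ (4 : ℕ)) := by
      rw [Real.log_pow]; push_cast; field_simp; ring
    rw [this, Real.exp_log (pow_pos hgq 4)]
  simp only [hd1, hd2, hiter 3, hiter 4, hxval]
  field_simp
  ring
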